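/- arXiv:2108.11998 — 3 statements merged into one kernel-verified Lean document; each statement's English description precedes it below -/
import Mathlib

section
/- Let X be a random vector taking values in the standard N-simplex Δ_N (so X_n ≥ 0 and Σ_n X_n = 1 a.s.), with μ_n = E[X_n] > 0 for all n, and covariance matrix σ_{nl} = Cov(X_n, X_l). Define the diagonal matrix M = diag(1/μ_1, ..., 1/μ_N) and the matrix S with entries S_{nl} = σ_{nl}/(μ_n μ_l). Then for every vector c ∈ ℝ^N with Σ_n c_n = 0, one has cᵀ(M − S)c ≥ 0. -/
open MeasureTheory Finset
open scoped MeasureTheory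

/-- Lemma 1 of the paper: for a simplex-valued random vector `X` with positive
component means `μ` and covariance matrix `σ`, the quadratic form of `M - S`
(with `M = diag(1/μ)` and `S n l = σ n l / (μ n μ l)`) is nonnegative on
sum-zero vectors. -/
theorem stmt0 {Ω : Type*} [MeasureSpace Ω] [IsProbabilityMeasure (volume : Measure Ω)]
    {N : ℕ} (X : Ω → Fin N → ℝ)
    (hmeas : ∀ n, Measurable fun ω => X ω n)
    (hsimplex : ∀ᵐ ω ∂(volume : Measure Ω), (∀ n, 0 ≤ X ω n) ∧ ∑ n, X ω n = 1)
    (μ : Fin N → ℝ) (hμ : ∀ n, μ n = ∫ ω, X ω n ∂(volume : Measure Ω)) (hμpos : ∀ n, 0 < μ n)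
    (σ : Fin N → Fin N → ℝ)
    (hσ : ∀ n l, σ n l = ∫ ω, (X ω n - μ n) * (X ω l - μ l) ∂(volume : Measure Ω))
    (c : Fin N → ℝ) (hc : ∑ n, c n = 0) :
    0 ≤ ∑ n, ∑ l, c n * c l * ((if n = l then 1 / μ n else 0) - σ n l / (μ n * μ l)) := by
  classical
  have hμne : ∀ n, μ n ≠ 0 := fun n => (hμpos n).ne'
  set b : Fin N → ℝ := fun n => c n / μ n with hbdef
  -- a.e. bounds on X
  have hbound : ∀ᵐ ω ∂(volume : Measure Ω), ∀ n, X ω n ∈ Set.Icc (0:ℝ) 1 := by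
    filter_upwards [hsimplex] with ω hω
    intro n
    refine ⟨hω.1 n, ?_⟩
    calc X ω n ≤ ∑ m, X ω m := Finset.single_le_sum (fun m _ => hω.1 m) (Finset.mem_univ n)
    _ = 1 := hω.2
  have hXint : ∀ n, Integrable (fun ω => X ω n) := by
    intro n
    refine Integrable.mono' (integrable_const 1) (hmeas n).aestronglyMeasurable ?_
    filter_upwards [hbound] with ω hω
    rw [Real.norm_eq_abs, abs_of_nonneg (hω n).1]
    exact (hω n).2
  have hprodint : ∀ n l, Integrable (fun ω => (X ω n - μ n) * (X ω l - μ l)) := by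
    intro n l
    refine Integrable.mono' (integrable_const ((1 + |μ n|) * (1 + |μ l|)))
      (((hmeas n).sub measurable_const).mul
        ((hmeas l).sub measurable_const)).aestronglyMeasurable ?_
    filter_upwards [hbound] with ω hω
    rw [Real.norm_eq_abs, abs_mul]
    have key : ∀ m, |X ω m - μ m| ≤ 1 + |μ m| := by
      intro m
      calc |X ω m - μ m| ≤ |X ω m| + |μ m| := abs_sub _ _
      _ ≤ 1 + |μ m| := by
          have := abs_of_nonneg (hω m).1
          nlinarith [(hω m).2, abs_nonneg (X ω m)]
    exact mul_le_mul (key n) (key l) (abs_nonneg _)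
      (by positivity)
  -- the centered linear combination
  set g : Ω → ℝ := fun ω => ∑ n, b n * (X ω n - μ n) with hgdef
  -- S-part equals ∫ g²
  have hA : ∑ n, ∑ l, c n * c l * (σ n l / (μ n * μ l)) = ∫ ω, (g ω) ^ 2 := by
    have hsq : ∀ ω, (g ω) ^ 2 = ∑ n, ∑ l, b n * b l * ((X ω n - μ n) * (X ω l - μ l)) := by
      intro ω
      rw [sq, hgdef, Finset.sum_mul_sum]
      apply Finset.sum_congr rfl; intro n _
      apply Finset.sum_congr rfl; intro l _
      ring
    rw [show (fun ω => (g ω) ^ 2) = fun ω =>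
        ∑ n, ∑ l, b n * b l * ((X ω n - μ n) * (X ω l - μ l)) from funext hsq]
    rw [integral_finset_sum _ (fun n _ => integrable_finset_sum _
      (fun l _ => ((hprodint n l).const_mul _)))]
    apply Finset.sum_congr rfl; intro n _
    rw [integral_finset_sum _ (fun l _ => ((hprodint n l).const_mul _))]
    apply Finset.sum_congr rfl; intro l _
    rw [integral_const_mul, ← hσ n l, hbdef]
    have h1 := hμne n
    have h2 := hμne l
    field_simp
  -- M-part
  have hdiag : ∑ n, ∑ l, c n * c l * (if n = l then 1 / μ n else 0)
      = ∫ ω, ∑ n, (b n) ^ 2 * X ω n := by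
    rw [integral_finset_sum _ (fun n _ => (hXint n).const_mul _)]
    apply Finset.sum_congr rfl; intro n _
    rw [Finset.sum_eq_single n (fun l _ hl => by simp [Ne.symm hl]) (by simp)]
    rw [integral_const_mul, ← hμ n, hbdef]
    have h1 := hμne n
    field_simp
    simp [h1]
  have hsplit : ∑ n, ∑ l, c n * c l * ((if n = l then 1 / μ n else 0) - σ n l / (μ n * μ l))
      = (∑ n, ∑ l, c n * c l * (if n = l then 1 / μ n else 0))
        - ∑ n, ∑ l, c n * c l * (σ n l / (μ n * μ l)) := by
    rw [← Finset.sum_sub_distrib]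
    apply Finset.sum_congr rfl; intro n _
    rw [← Finset.sum_sub_distrib]
    apply Finset.sum_congr rfl; intro l _
    ring
  rw [hsplit, hdiag, hA]
  -- integrability of g²
  have hgmeas : Measurable g := by
    apply Finset.measurable_sum
    intro n _
    exact ((hmeas n).sub measurable_const).const_mul _
  have hgsqint : Integrable (fun ω => (g ω) ^ 2) := by
    refine Integrable.mono' (integrable_const ((∑ n, |b n| * (1 + |μ n|)) ^ 2))
      (hgmeas.pow_const 2).aestronglyMeasurable ?_
    filter_upwards [hbound] with ω hω
    rw [Real.norm_eq_abs, abs_pow]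
    have hg : |g ω| ≤ ∑ n, |b n| * (1 + |μ n|) := by
      calc |g ω| ≤ ∑ n, |b n * (X ω n - μ n)| := Finset.abs_sum_le_sum_abs _ _
      _ ≤ ∑ n, |b n| * (1 + |μ n|) := by
          apply Finset.sum_le_sum
          intro n _
          rw [abs_mul]
          apply mul_le_mul_of_nonneg_left _ (abs_nonneg _)
          calc |X ω n - μ n| ≤ |X ω n| + |μ n| := abs_sub _ _
          _ ≤ 1 + |μ n| := by
              have := abs_of_nonneg (hω n).1
              nlinarith [(hω n).2, abs_nonneg (X ω n)]
    exact pow_le_pow_left₀ (abs_nonneg _) hg 2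
  have hsumint : Integrable (fun ω => ∑ n, (b n) ^ 2 * X ω n) :=
    integrable_finset_sum _ (fun n _ => (hXint n).const_mul _)
  rw [← integral_sub hsumint hgsqint]
  apply integral_nonneg_of_ae
  filter_upwards [hsimplex] with ω hω
  -- pointwise: g ω = ∑ b n * X ω n, then Cauchy-Schwarz
  have hgω : g ω = ∑ n, b n * X ω n := by
    rw [hgdef]
    simp only [mul_sub]
    rw [Finset.sum_sub_distrib]
    have hbm : ∀ n, b n * μ n = c n := fun n => div_mul_cancel₀ (c n) (hμne n)
    have : ∑ n, b n * μ n = 0 := by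
      rw [Finset.sum_congr rfl (fun n _ => hbm n)]
      exact hc
    rw [this, sub_zero]
  have hcs : (∑ n, b n * X ω n) ^ 2 ≤ ∑ n, (b n) ^ 2 * X ω n := by
    have := Finset.sum_sq_le_sum_mul_sum_of_sq_eq_mul Finset.univ
      (r := fun n => b n * X ω n) (f := fun n => X ω n) (g := fun n => X ω n * (b n) ^ 2)
      (fun n _ => hω.1 n) (fun n _ => mul_nonneg (hω.1 n) (sq_nonneg _))
      (fun n _ => by ring)
    rw [hω.2, one_mul] at this
    calc (∑ n, b n * X ω n) ^ 2 ≤ ∑ n, X ω n * (b n) ^ 2 := this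
    _ = ∑ n, (b n) ^ 2 * X ω n := by
        apply Finset.sum_congr rfl; intro n _; ring
  simp only [Pi.zero_apply]
  rw [sub_nonneg, hgω]
  exact hcs
end

section
/- Let θ_0 ≥ 0, θ_1 ≤ 0, v > 0, and define f(z) = θ_0 + (θ_1 − θ_0)/(1 + e^{−z}) for z ∈ ℝ. Then the scale function s(z) = ∫_0^z exp(−∫_0^y 2f(u)/v² du) dy satisfies s(z) = C ∫_1^{e^z} (1+u)^{2(θ_0−θ_1)/v²} u^{−1−2θ_0/v²} du with C = 4^{(θ_1−θ_0)/v²}; in particular s(z) → +∞ as z → +∞ and s(z) → −∞ as z → −∞. -/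
open Real Filter

/-- Scale function of the log-odds diffusion: explicit formula and divergence
at `±∞` when `θ₀ ≥ 0 ≥ θ₁`, `v > 0`. -/
theorem stmt8 (θ₀ θ₁ v : ℝ) (h0 : 0 ≤ θ₀) (h1 : θ₁ ≤ 0) (hv : 0 < v)
    (f : ℝ → ℝ) (hf : ∀ z, f z = θ₀ + (θ₁ - θ₀) / (1 + exp (-z)))
    (s : ℝ → ℝ)
    (hs : ∀ z, s z = ∫ y in (0:ℝ)..z, exp (-∫ u in (0:ℝ)..y, 2 * f u / v ^ 2)) :
    (∀ z, s z = (4 : ℝ) ^ ((θ₁ - θ₀) / v ^ 2) *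
      ∫ u in (1:ℝ)..exp z, (1 + u) ^ (2 * (θ₀ - θ₁) / v ^ 2) * u ^ (-1 - 2 * θ₀ / v ^ 2)) ∧
    Tendsto s atTop atTop ∧ Tendsto s atBot atBot := by
  have hv2 : (0:ℝ) < v ^ 2 := by positivity
  set a : ℝ := 2 * (θ₀ - θ₁) / v ^ 2 with ha
  set b : ℝ := 2 * θ₀ / v ^ 2 with hb
  set C : ℝ := (4 : ℝ) ^ ((θ₁ - θ₀) / v ^ 2) with hC
  set g : ℝ → ℝ := fun u => (1 + u) ^ a * u ^ (-1 - b) with hg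
  have ha0 : 0 ≤ a := by
    apply div_nonneg _ hv2.le; linarith
  have hb0 : 0 ≤ b := by
    apply div_nonneg _ hv2.le; linarith
  have hba : b ≤ a := by
    rw [ha, hb]; gcongr; linarith
  have hC0 : 0 < C := rpow_pos_of_pos (by norm_num) _
  have hC2 : C = (2:ℝ) ^ (-a) := by
    have h4 : (4:ℝ) = (2:ℝ) ^ (2:ℝ) := by
      rw [show (2:ℝ) = ((2:ℕ):ℝ) by norm_num, Real.rpow_natCast]; norm_num
    rw [hC, h4, ← Real.rpow_mul (by norm_num)]
    congr 1
    rw [ha]; ring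
  -- continuity of f
  have hfc : Continuous f := by
    have : f = fun z => θ₀ + (θ₁ - θ₀) / (1 + exp (-z)) := funext hf
    rw [this]
    exact continuous_const.add (continuous_const.div
      (continuous_const.add (Real.continuous_exp.comp continuous_neg))
      (fun x => by positivity))
  -- antiderivative of the inner integrand
  set F : ℝ → ℝ := fun y => b * y - a * Real.log (1 + Real.exp y) with hF
  have hFd : ∀ y : ℝ, HasDerivAt F (2 * f y / v ^ 2) y := by
    intro y
    have h1 : (0:ℝ) < 1 + Real.exp y := by positivity
    have hd1 : HasDerivAt (fun y : ℝ => b * y) b y := by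
      simpa using (hasDerivAt_id y).const_mul b
    have hd2 : HasDerivAt (fun y : ℝ => Real.log (1 + Real.exp y))
        (Real.exp y / (1 + Real.exp y)) y := by
      have := ((Real.hasDerivAt_exp y).const_add 1).log h1.ne'
      simpa using this
    have := hd1.sub (hd2.const_mul a)
    refine this.congr_deriv ?_
    rw [hf, Real.exp_neg, ha, hb]
    have h2 : Real.exp y ≠ 0 := (Real.exp_pos y).ne'
    have h3 : 1 + (Real.exp y)⁻¹ ≠ 0 := by positivity
    field_simp
    ring
  have hinner : ∀ y : ℝ, (∫ u in (0:ℝ)..y, 2 * f u / v ^ 2) = F y - F 0 := by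
    intro y
    exact intervalIntegral.integral_eq_sub_of_hasDerivAt (fun t _ => hFd t)
      ((Continuous.div_const (continuous_const.mul hfc) _).intervalIntegrable 0 y)
  -- pointwise identity
  have hpoint : ∀ y : ℝ, Real.exp (-(F y - F 0)) = Real.exp y * (C * g (Real.exp y)) := by
    intro y
    have h1 : (0:ℝ) < 1 + Real.exp y := by positivity
    rw [hC2, hg]
    simp only
    rw [Real.rpow_def_of_pos h1, Real.rpow_def_of_pos (Real.exp_pos y),
      Real.rpow_def_of_pos (by norm_num : (0:ℝ) < 2), Real.log_exp, hF]
    simp only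
    rw [← Real.exp_add, ← Real.exp_add, ← Real.exp_add]
    congr 1
    simp [Real.exp_zero]
    ring_nf
  -- key formula
  have key : ∀ z : ℝ, s z = C * ∫ u in (1:ℝ)..Real.exp z, g u := by
    intro z
    rw [hs z]
    simp_rw [hinner, hpoint]
    have hsub : (∫ y in (0:ℝ)..z, Real.exp y • ((fun u => C * g u) ∘ Real.exp) y)
        = ∫ u in (Real.exp 0)..(Real.exp z), C * g u := by
      apply intervalIntegral.integral_comp_smul_deriv'
        (fun x _ => Real.hasDerivAt_exp x) Real.continuousOn_exp
      apply ContinuousOn.mono (s := {u : ℝ | 0 < u})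
      · apply ContinuousOn.mul continuousOn_const
        apply ContinuousOn.mul
        · exact (continuousOn_const.add continuousOn_id).rpow_const
            (fun x hx => Or.inl (by have : (0:ℝ) < x := hx; show (1:ℝ) + x ≠ 0; positivity))
        · exact continuousOn_id.rpow_const (fun x hx => Or.inl (ne_of_gt hx))
      · rintro x ⟨y, -, rfl⟩
        exact Real.exp_pos y
    simp only [Function.comp, smul_eq_mul] at hsub
    rw [hsub, Real.exp_zero, intervalIntegral.integral_const_mul]
  -- integrability helpers
  have hgint : ∀ p q : ℝ, 0 < p → 0 < q → IntervalIntegrable g MeasureTheory.volume p q := by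
    intro p q hp hq
    apply ContinuousOn.intervalIntegrable
    apply ContinuousOn.mono (s := {u : ℝ | 0 < u})
    · apply ContinuousOn.mul
      · exact (continuousOn_const.add continuousOn_id).rpow_const
          (fun x hx => Or.inl (by have : (0:ℝ) < x := hx; show (1:ℝ) + x ≠ 0; positivity))
      · exact continuousOn_id.rpow_const (fun x hx => Or.inl (ne_of_gt hx))
    · intro x hx
      rcases Set.mem_uIcc.mp hx with h | h
      · exact lt_of_lt_of_le hp h.1
      · exact lt_of_lt_of_le hq h.1
  have hoint : ∀ p q : ℝ, 0 < p → 0 < q →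
      IntervalIntegrable (fun u : ℝ => 1 / u) MeasureTheory.volume p q := by
    intro p q hp hq
    apply ContinuousOn.intervalIntegrable
    apply ContinuousOn.mono (s := {u : ℝ | 0 < u})
    · exact continuousOn_const.div continuousOn_id (fun x hx => ne_of_gt hx)
    · intro x hx
      rcases Set.mem_uIcc.mp hx with h | h
      · exact lt_of_lt_of_le hp h.1
      · exact lt_of_lt_of_le hq h.1
  -- lower bound at +∞
  have hub : ∀ z : ℝ, 0 ≤ z → C * z ≤ s z := by
    intro z hz
    have he1 : (1:ℝ) ≤ Real.exp z := Real.one_le_exp hz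
    have hmono : (∫ u in (1:ℝ)..Real.exp z, 1 / u) ≤ ∫ u in (1:ℝ)..Real.exp z, g u := by
      apply intervalIntegral.integral_mono_on he1 (hoint _ _ one_pos (Real.exp_pos z))
        (hgint _ _ one_pos (Real.exp_pos z))
      intro u hu
      obtain ⟨hu1, -⟩ := hu
      have hu0 : (0:ℝ) < u := lt_of_lt_of_le one_pos hu1
      have s1 : u ^ a ≤ (1 + u) ^ a :=
        Real.rpow_le_rpow hu0.le (by linarith) ha0
      have s2 : u ^ (-1 : ℝ) ≤ u ^ (a + (-1 - b)) :=
        Real.rpow_le_rpow_of_exponent_le hu1 (by linarith)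
      calc 1 / u = u ^ (-1 : ℝ) := by rw [Real.rpow_neg_one, one_div]
        _ ≤ u ^ (a + (-1 - b)) := s2
        _ = u ^ a * u ^ (-1 - b) := Real.rpow_add hu0 _ _
        _ ≤ (1 + u) ^ a * u ^ (-1 - b) :=
            mul_le_mul_of_nonneg_right s1 (Real.rpow_nonneg hu0.le _)
    have hlog : (∫ u in (1:ℝ)..Real.exp z, 1 / u) = z := by
      rw [integral_one_div (by
        intro h
        rcases Set.mem_uIcc.mp h with h | h <;> linarith)]
      simp [Real.log_exp]
    rw [key z]
    calc C * z = C * ∫ u in (1:ℝ)..Real.exp z, 1 / u := by rw [hlog]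
      _ ≤ C * ∫ u in (1:ℝ)..Real.exp z, g u := by
          exact mul_le_mul_of_nonneg_left (by rw [← hlog] at hmono ⊢; exact hmono) hC0.le
  -- upper bound at -∞
  have hlb : ∀ z : ℝ, z ≤ 0 → s z ≤ C * z := by
    intro z hz
    have he1 : Real.exp z ≤ 1 := Real.exp_le_one_iff.mpr hz
    have hez : 0 < Real.exp z := Real.exp_pos z
    have hmono : (∫ u in Real.exp z..(1:ℝ), 1 / u) ≤ ∫ u in Real.exp z..(1:ℝ), g u := by
      apply intervalIntegral.integral_mono_on he1 (hoint _ _ hez one_pos)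
        (hgint _ _ hez one_pos)
      intro u hu
      obtain ⟨hu1, hu2⟩ := hu
      have hu0 : (0:ℝ) < u := lt_of_lt_of_le hez hu1
      have s1 : (1:ℝ) ≤ (1 + u) ^ a := by
        calc (1:ℝ) = 1 ^ a := (Real.one_rpow a).symm
          _ ≤ (1 + u) ^ a := Real.rpow_le_rpow zero_le_one (by linarith) ha0
      have s2 : u ^ (-1 : ℝ) ≤ u ^ (-1 - b) :=
        Real.rpow_le_rpow_of_exponent_ge hu0 hu2 (by linarith)
      calc 1 / u = u ^ (-1 : ℝ) := by rw [Real.rpow_neg_one, one_div]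
        _ ≤ u ^ (-1 - b) := s2
        _ = 1 * u ^ (-1 - b) := (one_mul _).symm
        _ ≤ (1 + u) ^ a * u ^ (-1 - b) :=
            mul_le_mul_of_nonneg_right s1 (Real.rpow_nonneg hu0.le _)
    have hlog : (∫ u in Real.exp z..(1:ℝ), 1 / u) = -z := by
      rw [integral_one_div (by
        intro h
        rcases Set.mem_uIcc.mp h with h | h <;> [linarith; linarith])]
      rw [one_div, Real.log_inv, Real.log_exp]
    rw [key z, intervalIntegral.integral_symm]
    have : -z ≤ ∫ u in Real.exp z..(1:ℝ), g u := hlog ▸ hmono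
    nlinarith [hC0]
  refine ⟨fun z => by simpa using key z, ?_, ?_⟩
  · apply tendsto_atTop_mono' atTop _ (tendsto_id.const_mul_atTop hC0)
    filter_upwards [eventually_ge_atTop (0:ℝ)] with z hz using hub z hz
  · apply tendsto_atBot_mono' atBot _ (tendsto_id.const_mul_atBot hC0)
    filter_upwards [eventually_le_atBot (0:ℝ)] with z hz using hlb z hz
end

section
/- Let θ_0 > 0 and θ_1 ≥ 0 and consider the ODE y'(t) = y(1−y)(θ_0 + (θ_1−θ_0)y) with y(0) = y_0 ∈ (0,1). Then the solution stays in (0,1) and converges to 1 as t → ∞. -/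
open Filter Set

/-- Deterministic two-agent dynamics, case II.a: for `θ₀ > 0`, `θ₁ ≥ 0`, every
solution of `y' = y(1-y)(θ₀ + (θ₁-θ₀)y)` with `y 0 = y₀ ∈ (0,1)` stays in
`(0,1)` and converges to `1`. -/
theorem stmt12 (θ₀ θ₁ : ℝ) (h0 : 0 < θ₀) (h1 : 0 ≤ θ₁)
    (y₀ : ℝ) (hy₀ : y₀ ∈ Ioo (0:ℝ) 1)
    (y : ℝ → ℝ) (hy0 : y 0 = y₀)
    (hy : ∀ t ≥ (0:ℝ), HasDerivAt y (y t * (1 - y t) * (θ₀ + (θ₁ - θ₀) * y t)) t) :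
    (∀ t ≥ (0:ℝ), y t ∈ Ioo (0:ℝ) 1) ∧ Tendsto y atTop (nhds 1) := by
  obtain ⟨hy₀0, hy₀1⟩ := hy₀
  have hyc : ∀ t ≥ (0:ℝ), ContinuousAt y t := fun t ht => (hy t ht).continuousAt
  set Y : ℝ → ℝ := fun t => y (max t 0) with hYdef
  have hYeq : ∀ t ≥ (0:ℝ), Y t = y t := by
    intro t ht
    simp [hYdef, max_eq_left ht]
  have hyco : ContinuousOn y (Ici (0:ℝ)) := fun t ht => (hyc t ht).continuousWithinAt
  have hYcont : Continuous Y := by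
    apply hyco.comp_continuous (continuous_id.max continuous_const)
    intro x; exact le_max_right x 0
  -- integrating factors
  have hc' : Continuous fun s => Y s * (θ₀ + (θ₁ - θ₀) * Y s) := by fun_prop
  have hd' : Continuous fun s => (1 - Y s) * (θ₀ + (θ₁ - θ₀) * Y s) := by fun_prop
  set C : ℝ → ℝ := fun t => ∫ s in (0:ℝ)..t, Y s * (θ₀ + (θ₁ - θ₀) * Y s) with hCdef
  set D : ℝ → ℝ := fun t => ∫ s in (0:ℝ)..t, (1 - Y s) * (θ₀ + (θ₁ - θ₀) * Y s) with hDdef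
  have hC : ∀ t : ℝ, HasDerivAt C (Y t * (θ₀ + (θ₁ - θ₀) * Y t)) t :=
    fun t => (hc'.integral_hasStrictDerivAt 0 t).hasDerivAt
  have hD : ∀ t : ℝ, HasDerivAt D ((1 - Y t) * (θ₀ + (θ₁ - θ₀) * Y t)) t :=
    fun t => (hd'.integral_hasStrictDerivAt 0 t).hasDerivAt
  have hCc : Continuous C := by
    rw [continuous_iff_continuousAt]; exact fun t => (hC t).continuousAt
  have hDc : Continuous D := by
    rw [continuous_iff_continuousAt]; exact fun t => (hD t).continuousAt
  have hC0 : C 0 = 0 := intervalIntegral.integral_same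
  have hD0 : D 0 = 0 := intervalIntegral.integral_same
  -- upper invariance: (1 - y t) * exp (C t) is constant on [0, ∞)
  have key1 : ∀ T ≥ (0:ℝ), (1 - y T) * Real.exp (C T) = 1 - y₀ := by
    intro T hT
    have hcont : ContinuousOn (fun t => (1 - y t) * Real.exp (C t)) (Icc 0 T) :=
      ((continuousOn_const.sub (hyco.mono Icc_subset_Ici_self)).mul
        (hCc.rexp.continuousOn))
    have hder : ∀ x ∈ Ico (0:ℝ) T,
        HasDerivWithinAt (fun t => (1 - y t) * Real.exp (C t)) 0 (Ici x) x := by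
      intro x hx
      have hx0 : (0:ℝ) ≤ x := hx.1
      have h1' : HasDerivAt (fun t => 1 - y t)
          (-(y x * (1 - y x) * (θ₀ + (θ₁ - θ₀) * y x))) x := (hy x hx0).const_sub 1
      have h2' : HasDerivAt (fun t => Real.exp (C t))
          (Real.exp (C x) * (Y x * (θ₀ + (θ₁ - θ₀) * Y x))) x := (hC x).exp
      have := (h1'.mul h2').hasDerivWithinAt (s := Ici x)
      convert this using 1
      · rfl
      · rfl
      · rfl
      rw [hYeq x hx0]; ring
    have := constant_of_has_deriv_right_zero hcont hder T (right_mem_Icc.mpr hT)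
    simpa [hC0, hy0] using this
  -- lower invariance: y t * exp (- D t) is constant on [0, ∞)
  have key2 : ∀ T ≥ (0:ℝ), y T * Real.exp (-D T) = y₀ := by
    intro T hT
    have hcont : ContinuousOn (fun t => y t * Real.exp (-D t)) (Icc 0 T) :=
      ((hyco.mono Icc_subset_Ici_self).mul (hDc.neg.rexp.continuousOn))
    have hder : ∀ x ∈ Ico (0:ℝ) T,
        HasDerivWithinAt (fun t => y t * Real.exp (-D t)) 0 (Ici x) x := by
      intro x hx
      have hx0 : (0:ℝ) ≤ x := hx.1
      have h2' : HasDerivAt (fun t => Real.exp (-D t))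
          (Real.exp (-D x) * (-((1 - Y x) * (θ₀ + (θ₁ - θ₀) * Y x)))) x := (hD x).neg.exp
      have := ((hy x hx0).mul h2').hasDerivWithinAt (s := Ici x)
      convert this using 1
      · rfl
      · rfl
      · rfl
      rw [hYeq x hx0]; ring
    have := constant_of_has_deriv_right_zero hcont hder T (right_mem_Icc.mpr hT)
    simpa [hD0, hy0] using this
  -- invariance
  have hInv : ∀ t ≥ (0:ℝ), y t ∈ Ioo (0:ℝ) 1 := by
    intro t ht
    constructor
    · have h := key2 t ht
      nlinarith [Real.exp_pos (-D t)]
    · have h := key1 t ht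
      nlinarith [Real.exp_pos (C t)]
  refine ⟨hInv, ?_⟩
  -- monotonicity of y on [0, ∞)
  have hmono : MonotoneOn y (Ici (0:ℝ)) := by
    apply monotoneOn_of_deriv_nonneg (convex_Ici 0) hyco
    · intro x hx
      rw [interior_Ici] at hx
      exact (hy x (le_of_lt hx)).differentiableAt.differentiableWithinAt
    · intro x hx
      rw [interior_Ici] at hx
      rw [(hy x (le_of_lt hx)).deriv]
      obtain ⟨ha, hb⟩ := hInv x (le_of_lt hx)
      have hpos : 0 ≤ θ₀ + (θ₁ - θ₀) * y x := by
        nlinarith [mul_nonneg ha.le h1, mul_pos (show (0:ℝ) < 1 - y x by linarith) h0]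
      exact mul_nonneg (mul_nonneg ha.le (by linarith)) hpos
  have hYmono : Monotone Y := fun s t hst =>
    hmono (le_max_right s 0) (le_max_right t 0) (max_le_max hst le_rfl)
  have hbdd : BddAbove (range Y) := by
    refine ⟨1, ?_⟩
    rintro _ ⟨t, rfl⟩
    exact (hInv (max t 0) (le_max_right t 0)).2.le
  have hLten : Tendsto Y atTop (nhds (⨆ t, Y t)) := tendsto_atTop_ciSup hYmono hbdd
  set L : ℝ := ⨆ t, Y t with hLdef
  have hyL : ∀ t ≥ (0:ℝ), y t ≤ L := fun t ht => (hYeq t ht) ▸ le_ciSup hbdd t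
  have hy₀L : y₀ ≤ L := hy0 ▸ hyL 0 le_rfl
  have hL1 : L ≤ 1 := ciSup_le fun t => (hInv (max t 0) (le_max_right t 0)).2.le
  have hLeq : L = 1 := by
    by_contra hne
    have hL1' : L < 1 := lt_of_le_of_ne hL1 hne
    set ε : ℝ := y₀ * ((1 - L) * ((1 - L) * θ₀)) with hεdef
    have hε : 0 < ε := by
      have : 0 < 1 - L := by linarith
      positivity
    -- y grows at least linearly with slope ε
    have hgrow : MonotoneOn (fun t => y t - ε * t) (Ici (0:ℝ)) := by
      apply monotoneOn_of_deriv_nonneg (convex_Ici 0)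
      · exact hyco.sub (continuous_const.mul continuous_id).continuousOn
      · intro x hx
        rw [interior_Ici] at hx
        exact ((hy x (le_of_lt hx)).sub
          ((hasDerivAt_id x).const_mul ε)).differentiableAt.differentiableWithinAt
      · intro x hx
        rw [interior_Ici] at hx
        have hder : HasDerivAt (fun t => y t - ε * t)
            (y x * (1 - y x) * (θ₀ + (θ₁ - θ₀) * y x) - ε * 1) x :=
          (hy x (le_of_lt hx)).sub ((hasDerivAt_id x).const_mul ε)
        rw [hder.deriv]
        obtain ⟨ha, hb⟩ := hInv x (le_of_lt hx)
        have hax : y₀ ≤ y x := by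
          have := hmono (self_mem_Ici) (mem_Ici.mpr (le_of_lt hx)) (le_of_lt hx)
          rwa [hy0] at this
        have hbx : y x ≤ L := hyL x (le_of_lt hx)
        have hf1 : (1 - L) * θ₀ ≤ θ₀ + (θ₁ - θ₀) * y x := by nlinarith
        have hf2 : y₀ * (1 - L) ≤ y x * (1 - y x) := by nlinarith
        have hf3 : (0:ℝ) < (1 - L) * θ₀ := by
          have : 0 < 1 - L := by linarith
          positivity
        rw [hεdef]
        have hyy : (0:ℝ) ≤ y x * (1 - y x) := mul_nonneg ha.le (by linarith)
        nlinarith [mul_le_mul hf2 hf1 hf3.le hyy]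
    have h10 : (0:ℝ) ≤ 1 / ε := by positivity
    have := hgrow self_mem_Ici (mem_Ici.mpr h10) h10
    simp only [hy0, mul_zero, sub_zero] at this
    have hcan : ε * (1 / ε) = 1 := by field_simp
    have hlt : y (1 / ε) < 1 := (hInv (1 / ε) h10).2
    nlinarith
  have hEq : Y =ᶠ[atTop] y := by
    filter_upwards [eventually_ge_atTop (0:ℝ)] with t ht using hYeq t ht
  exact Tendsto.congr' hEq (hLeq ▸ hLten)
end
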